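/- Let f(z) = Σ aₙ zⁿ be a power series with non-negative real coefficients and finite positive radius of convergence r. Then z = r is a singularity of f, i.e., f has no analytic continuation to a neighbourhood of r (Pringsheim's theorem). -/

import Mathlib

open Metric Filter FormalMultilinearSeries
open scoped NNReal ENNReal

/-- Binomial row sum: `∑ₖ C(n,k) b x^(n-k) y^k = b (x+y)^n` as a `tsum`. -/
private lemma pringsheim_row_tsum {K : Type*} [RCLike K] (b x y : K) (n : ℕ) :
    ∑' k : ℕ, (n.choose k : K) * b * x ^ (n - k) * y ^ k = b * (x + y) ^ n := by
  rw [tsum_eq_sum (s := Finset.range (n + 1)) (fun k hk => by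
    have hn : n < k := by simpa using hk
    simp [Nat.choose_eq_zero_of_lt hn])]
  rw [add_comm x y, add_pow, Finset.mul_sum]
  exact Finset.sum_congr rfl fun k _ => by ring

private lemma pringsheim_coe_lt {t : ℝ≥0} {s : ℝ} (hs : 0 ≤ s)
    (h : (t : ℝ≥0∞) < ENNReal.ofReal s) : (t : ℝ) < s := by
  have h2 := (ENNReal.toReal_lt_toReal ENNReal.coe_ne_top ENNReal.ofReal_ne_top).mpr h
  rwa [ENNReal.coe_toReal, ENNReal.toReal_ofReal hs] at h2

/-- **Pringsheim's theorem.** Let `f(z) = ∑ aₙ zⁿ` be a power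
series with non-negative real coefficients and finite positive radius of
convergence `r` (characterised by: the series converges absolutely at every
real `x` with `0 ≤ x < r` and diverges at every real `x > r`).  Then `z = r`
is a singularity of `f`: there is no holomorphic function on an open disc
around `r` agreeing with `f` on the intersection with the disc of
convergence. -/
theorem pringsheim (a : ℕ → ℝ) (hpos : ∀ n, 0 ≤ a n)
    (r : ℝ) (hr : 0 < r)
    (hconv : ∀ x : ℝ, 0 ≤ x → x < r → Summable fun n => a n * x ^ n)
    (hdiv : ∀ x : ℝ, r < x → ¬ Summable fun n => a n * x ^ n) :
    ¬ ∃ ε : ℝ, 0 < ε ∧ ∃ g : ℂ → ℂ,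
        DifferentiableOn ℂ g (Metric.ball (r : ℂ) ε) ∧
        ∀ z ∈ Metric.ball (r : ℂ) ε ∩ Metric.ball (0 : ℂ) r,
          g z = ∑' n : ℕ, (a n : ℂ) * z ^ n := by
  rintro ⟨ε₀, hε₀, g, hg, hagree⟩
  set δ : ℝ := min ε₀ (r / 4) with hδdef
  have hδ0 : 0 < δ := lt_min hε₀ (by linarith)
  have hδr : δ ≤ r / 4 := min_le_right _ _
  have hδε : δ ≤ ε₀ := min_le_left _ _
  set x₀ : ℝ := r - δ / 2 with hx₀def
  have hx₀0 : 0 < x₀ := by rw [hx₀def]; linarith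
  have hx₀r : x₀ < r := by rw [hx₀def]; linarith
  clear_value x₀ δ
  set F : ℂ → ℂ := fun z => ∑' n : ℕ, (a n : ℂ) * z ^ n with hFdef
  have hFapp : ∀ z : ℂ, F z = ∑' n : ℕ, (a n : ℂ) * z ^ n := fun _ => rfl
  -- summability of the series inside the disc
  have hnorm : ∀ (n : ℕ) (z : ℂ), ‖(a n : ℂ) * z ^ n‖ = a n * ‖z‖ ^ n := by
    intro n z
    rw [norm_mul, norm_pow, Complex.norm_real, Real.norm_eq_abs, abs_of_nonneg (hpos n)]
  have hsumz : ∀ z : ℂ, ‖z‖ < r → Summable fun n => (a n : ℂ) * z ^ n := by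
    intro z hz
    apply Summable.of_norm
    simpa only [hnorm] using hconv ‖z‖ (norm_nonneg z) hz
  -- the power series of F at 0
  set p0 := FormalMultilinearSeries.ofScalars ℂ (fun n => (a n : ℂ)) with hp0def
  have hp0norm : ∀ n, ‖p0 n‖ = a n := by
    intro n
    rw [hp0def, ofScalars_norm, Complex.norm_real, Real.norm_eq_abs, abs_of_nonneg (hpos n)]
  have hp0rad : ENNReal.ofReal r ≤ p0.radius := by
    apply ENNReal.le_of_forall_nnreal_lt
    intro t ht
    apply p0.le_radius_of_summable
    simp only [hp0norm]
    exact hconv t t.2 (pringsheim_coe_lt hr.le ht)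
  have hF0 : HasFPowerSeriesOnBall F p0 0 (ENNReal.ofReal r) := by
    refine ⟨hp0rad, by simp [hr], ?_⟩
    intro y hy
    rw [mem_emetric_ball_zero_iff] at hy
    have hy' : ‖y‖ < r := by
      have := pringsheim_coe_lt hr.le hy
      simpa using this
    have hs := (hsumz y hy').hasSum
    simp only [hp0def, ofScalars_apply_eq, smul_eq_mul, zero_add]
    exact hs
  -- the glued function h
  set h : ℂ → ℂ := fun z => if ‖z‖ < r then F z else g z with hhdef
  have hball0 : ∀ w ∈ ball (0 : ℂ) r, h w = F w := by
    intro w hw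
    rw [mem_ball, dist_zero_right] at hw
    simp only [hhdef, if_pos hw]
  have hballr : ∀ w ∈ ball ((r : ℝ) : ℂ) δ, h w = g w := by
    intro w hw
    by_cases hwr : ‖w‖ < r
    · rw [hball0 w (by rwa [mem_ball, dist_zero_right]), hFapp]
      exact (hagree w ⟨ball_subset_ball hδε hw, by rwa [mem_ball, dist_zero_right]⟩).symm
    · simp only [hhdef, if_neg hwr]
  -- geometry: the small disc around x₀ is covered
  have geom : ∀ z : ℂ, z ∈ ball ((x₀ : ℝ) : ℂ) δ → ‖z‖ < r ∨ z ∈ ball ((r : ℝ) : ℂ) δ := by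
    intro z hz
    rw [mem_ball, dist_eq_norm] at hz
    have hzsq : ‖z - ((x₀ : ℝ) : ℂ)‖ ^ 2 = (z.re - x₀) ^ 2 + z.im ^ 2 := by
      rw [Complex.sq_norm, Complex.normSq_apply]
      simp only [Complex.sub_re, Complex.sub_im, Complex.ofReal_re, Complex.ofReal_im]
      ring
    have h2 : (z.re - x₀) ^ 2 + z.im ^ 2 < δ ^ 2 := by
      rw [← hzsq]
      exact pow_lt_pow_left₀ hz (norm_nonneg _) two_ne_zero
    by_cases hc : z.re ≤ x₀ + δ / 4
    · left
      have hzsq0 : ‖z‖ ^ 2 = z.re ^ 2 + z.im ^ 2 := by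
        rw [Complex.sq_norm, Complex.normSq_apply]; ring
      refine lt_of_pow_lt_pow_left₀ 2 hr.le ?_
      rw [hzsq0]
      nlinarith [h2, hc, hδr, hδ0, hx₀0, hx₀def,
        mul_nonneg (by linarith : (0:ℝ) ≤ x₀ + δ / 4 - z.re) hx₀0.le,
        mul_pos hδ0 hδ0, mul_le_mul_of_nonneg_right hδr hδ0.le]
    · right
      push_neg at hc
      rw [mem_ball, dist_eq_norm]
      have hzsqr : ‖z - ((r : ℝ) : ℂ)‖ ^ 2 = (z.re - r) ^ 2 + z.im ^ 2 := by
        rw [Complex.sq_norm, Complex.normSq_apply]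
        simp only [Complex.sub_re, Complex.sub_im, Complex.ofReal_re, Complex.ofReal_im]
        ring
      refine lt_of_pow_lt_pow_left₀ 2 hδ0.le ?_
      rw [hzsqr]
      nlinarith [h2, hc, hδ0, hx₀def, mul_pos hδ0 hδ0]
  -- h is differentiable on ball(x₀, δ)
  have hdiff : DifferentiableOn ℂ h (ball ((x₀ : ℝ) : ℂ) δ) := by
    intro z hz
    apply DifferentiableAt.differentiableWithinAt
    rcases geom z hz with h1 | h2
    · have hz0 : z ∈ ball (0 : ℂ) r := by rwa [mem_ball, dist_zero_right]
      have hzE : z ∈ Metric.eball (0 : ℂ) (ENNReal.ofReal r) := by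
        rw [Metric.mem_eball, edist_zero_right, ENNReal.lt_ofReal_iff_toReal_lt enorm_ne_top]
        simpa using h1
      have hFz : DifferentiableAt ℂ F z := (hF0.analyticAt_of_mem hzE).differentiableAt
      exact hFz.congr_of_eventuallyEq
        (eventuallyEq_of_mem (isOpen_ball.mem_nhds hz0) hball0)
    · have hgz : DifferentiableAt ℂ g z :=
        hg.differentiableAt (isOpen_ball.mem_nhds (ball_subset_ball hδε h2))
      exact hgz.congr_of_eventuallyEq
        (eventuallyEq_of_mem (isOpen_ball.mem_nhds h2) hballr)
  -- the Cauchy power series of h at x₀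
  have hp : HasFPowerSeriesOnBall h (cauchyPowerSeries h ((x₀ : ℝ) : ℂ) (7 * δ / 8).toNNReal)
      ((x₀ : ℝ) : ℂ) (7 * δ / 8).toNNReal := by
    apply DifferentiableOn.hasFPowerSeriesOnBall
    · refine hdiff.mono ?_
      rw [Real.coe_toNNReal _ (by linarith)]
      exact closedBall_subset_ball (by linarith)
    · exact Real.toNNReal_pos.mpr (by linarith)
  have hx₀mem : ((x₀ : ℝ) : ℂ) ∈ ball (0 : ℂ) r := by
    rw [mem_ball, dist_zero_right, Complex.norm_real, Real.norm_eq_abs, abs_of_nonneg hx₀0.le]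
    exact hx₀r
  have hpF : HasFPowerSeriesAt F (cauchyPowerSeries h ((x₀ : ℝ) : ℂ) (7 * δ / 8).toNNReal) ((x₀ : ℝ) : ℂ) :=
    hp.hasFPowerSeriesAt.congr (eventuallyEq_of_mem (isOpen_ball.mem_nhds hx₀mem) hball0)
  -- the recentred coefficient series
  have hterm_nonneg : ∀ (t : ℝ), 0 ≤ t → ∀ nk : ℕ × ℕ,
      0 ≤ (nk.1.choose nk.2 : ℝ) * a nk.1 * x₀ ^ (nk.1 - nk.2) * t ^ nk.2 := by
    intro t ht nk
    exact mul_nonneg (mul_nonneg (mul_nonneg (Nat.cast_nonneg _) (hpos _))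
      (pow_nonneg hx₀0.le _)) (pow_nonneg ht _)
  have key : ∀ t : ℝ, 0 ≤ t → x₀ + t < r →
      Summable (fun nk : ℕ × ℕ =>
        (nk.1.choose nk.2 : ℝ) * a nk.1 * x₀ ^ (nk.1 - nk.2) * t ^ nk.2) := by
    intro t ht htr
    rw [summable_prod_of_nonneg (hterm_nonneg t ht)]
    constructor
    · intro n
      apply summable_of_ne_finset_zero (s := Finset.range (n + 1))
      intro k hk
      have hn : n < k := by simpa using hk
      simp [Nat.choose_eq_zero_of_lt hn]
    · refine (hconv (x₀ + t) (by linarith) htr).congr fun n => ?_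
      exact (pringsheim_row_tsum (a n) x₀ t n).symm
  have hδ4 : x₀ + δ / 4 < r := by rw [hx₀def]; linarith
  have hkey4 := key (δ / 4) (by linarith) hδ4
  have hck : ∀ k : ℕ, Summable fun n => (n.choose k : ℝ) * a n * x₀ ^ (n - k) := by
    intro k
    have hinj : Function.Injective (fun n : ℕ => ((n, k) : ℕ × ℕ)) := by
      intro m n hmn
      exact (Prod.ext_iff.mp hmn).1
    have h1 := hkey4.comp_injective hinj
    have ht0 : ((δ / 4 : ℝ)) ^ k ≠ 0 := pow_ne_zero _ (by linarith)
    have h2 := h1.mul_right ((δ / 4) ^ k)⁻¹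
    refine h2.congr fun n => ?_
    show (n.choose k : ℝ) * a n * x₀ ^ (n - k) * (δ / 4) ^ k * ((δ / 4) ^ k)⁻¹ = _
    rw [mul_assoc, mul_inv_cancel₀ ht0, mul_one]
  set c : ℕ → ℝ := fun k => ∑' n, (n.choose k : ℝ) * a n * x₀ ^ (n - k) with hcdef
  have hcnonneg : ∀ k, 0 ≤ c k := fun k => tsum_nonneg fun n =>
    mul_nonneg (mul_nonneg (Nat.cast_nonneg _) (hpos _)) (pow_nonneg hx₀0.le _)
  -- the rearrangement: for ‖y‖ < δ/2, ∑ₖ cₖ yᵏ = F (x₀ + y)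
  have hrearr : ∀ y : ℂ, ‖y‖ < δ / 2 →
      HasSum (fun k : ℕ => (c k : ℂ) * y ^ k) (F (((x₀ : ℝ) : ℂ) + y)) := by
    intro y hy
    have hyr : x₀ + ‖y‖ < r := by rw [hx₀def]; linarith
    set T : ℕ × ℕ → ℂ := fun nk =>
      (nk.1.choose nk.2 : ℂ) * (a nk.1 : ℂ) * ((x₀ : ℝ) : ℂ) ^ (nk.1 - nk.2) * y ^ nk.2
      with hTdef
    have hTsum : Summable T := by
      apply Summable.of_norm
      refine (key ‖y‖ (norm_nonneg y) hyr).congr fun nk => ?_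
      simp only [hTdef, norm_mul, norm_pow, Complex.norm_real, Complex.norm_natCast,
        Real.norm_eq_abs, abs_of_nonneg (hpos _), abs_of_nonneg hx₀0.le]
    have hrowval : ∀ n : ℕ, (∑' k, T (n, k)) = (a n : ℂ) * (((x₀ : ℝ) : ℂ) + y) ^ n :=
      fun n => pringsheim_row_tsum ((a n : ℂ)) (((x₀ : ℝ) : ℂ)) y n
    have hcols : ∀ k : ℕ, (∑' n, T (n, k)) = (c k : ℂ) * y ^ k := by
      intro k
      have : (∑' n, T (n, k)) =
          (∑' n, ((n.choose k : ℂ) * (a n : ℂ) * ((x₀ : ℝ) : ℂ) ^ (n - k))) * y ^ k := by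
        simp only [hTdef]
        exact tsum_mul_right
      rw [this, hcdef]
      congr 1
      rw [Complex.ofReal_tsum]
      exact tsum_congr fun n => by push_cast; ring
    have hswap : (∑' k, ∑' n, T (n, k)) = ∑' n, ∑' k, T (n, k) :=
      Summable.tsum_comm' hTsum (fun n => hTsum.prod_factor n) (fun k => hTsum.prod_symm.prod_factor k)
    have hsumcols : Summable fun k => ∑' n, T (n, k) := hTsum.prod_symm.prod
    have hsumc : Summable fun k => (c k : ℂ) * y ^ k := hsumcols.congr hcols
    rw [hsumc.hasSum_iff]
    calc (∑' k, (c k : ℂ) * y ^ k) = ∑' k, ∑' n, T (n, k) := (tsum_congr hcols).symm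
      _ = ∑' n, ∑' k, T (n, k) := hswap
      _ = ∑' n, (a n : ℂ) * (((x₀ : ℝ) : ℂ) + y) ^ n := tsum_congr hrowval
      _ = F (((x₀ : ℝ) : ℂ) + y) := (hFapp _).symm
  -- the recentred power series q
  set q := FormalMultilinearSeries.ofScalars ℂ (fun k => (c k : ℂ)) with hqdef
  have hqnorm : ∀ k, ‖q k‖ = c k := fun k => by
    rw [hqdef, ofScalars_norm, Complex.norm_real, Real.norm_eq_abs, abs_of_nonneg (hcnonneg k)]
  have hcts : ∀ t : ℝ, 0 ≤ t → t < δ / 2 → Summable fun k => c k * t ^ k := by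
    intro t ht ht2
    have hK := key t ht (by rw [hx₀def]; linarith)
    refine hK.prod_symm.prod.congr fun k => ?_
    exact (tsum_mul_right : ∑' n, ((n.choose k : ℝ) * a n * x₀ ^ (n - k)) * t ^ k = _)
  have hqrad : ENNReal.ofReal (δ / 4) ≤ q.radius := by
    apply ENNReal.le_of_forall_nnreal_lt
    intro t ht
    apply q.le_radius_of_summable
    simp only [hqnorm]
    exact hcts t t.2 (by linarith [pringsheim_coe_lt (by linarith : (0:ℝ) ≤ δ / 4) ht])
  have hqF : HasFPowerSeriesOnBall F q ((x₀ : ℝ) : ℂ) (ENNReal.ofReal (δ / 4)) := by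
    refine ⟨hqrad, by rw [ENNReal.ofReal_pos]; linarith, ?_⟩
    intro y hy
    rw [mem_emetric_ball_zero_iff] at hy
    have hy' : ‖y‖ < δ / 4 := by
      have := pringsheim_coe_lt (by linarith : (0:ℝ) ≤ δ / 4) hy
      simpa using this
    have hs := hrearr y (by linarith)
    simp only [hqdef, ofScalars_apply_eq, smul_eq_mul]
    exact hs
  -- uniqueness, transfer of radius, and final contradiction
  have hpq : cauchyPowerSeries h ((x₀ : ℝ) : ℂ) (7 * δ / 8).toNNReal = q :=
    hpF.eq_formalMultilinearSeries hqF.hasFPowerSeriesAt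
  set s : ℝ := 3 * δ / 4 with hsdef
  have hs0 : 0 ≤ s := by rw [hsdef]; linarith
  have hsrad : ((s.toNNReal : ℝ≥0) : ℝ≥0∞) < q.radius := by
    rw [← hpq]
    refine lt_of_lt_of_le ?_ hp.r_le
    rw [ENNReal.coe_lt_coe]
    rw [Real.toNNReal_lt_toNNReal_iff (by linarith : (0:ℝ) < 7 * δ / 8)]
    rw [hsdef]; linarith
  have hsq := q.summable_norm_mul_pow hsrad
  have hscoe : ((s.toNNReal : ℝ≥0) : ℝ) = s := Real.coe_toNNReal s hs0
  have hcs : Summable fun k => c k * s ^ k := by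
    refine hsq.congr fun k => ?_
    rw [hqnorm, hscoe]
  -- nonnegative Fubini back
  set W : ℕ × ℕ → ℝ := fun kn =>
    (kn.2.choose kn.1 : ℝ) * a kn.2 * x₀ ^ (kn.2 - kn.1) * s ^ kn.1 with hWdef
  have hWsum : Summable W := by
    rw [summable_prod_of_nonneg (fun kn => mul_nonneg (mul_nonneg (mul_nonneg
      (Nat.cast_nonneg _) (hpos _)) (pow_nonneg hx₀0.le _)) (pow_nonneg hs0 _))]
    constructor
    · intro k
      exact (hck k).mul_right (s ^ k)
    · refine hcs.congr fun k => ?_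
      exact (tsum_mul_right : ∑' n, ((n.choose k : ℝ) * a n * x₀ ^ (n - k)) * s ^ k = _).symm
  have hfinal : Summable fun n => a n * (x₀ + s) ^ n :=
    hWsum.prod_symm.prod.congr fun n => pringsheim_row_tsum (a n) x₀ s n
  exact hdiv (x₀ + s) (by rw [hx₀def, hsdef]; linarith) hfinal
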